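/- For all real θ > 0 and integers d ≥ 1, ∑_{k=0}^{d-1} ∑_{l=0}^{d-1} (C(d-1,k)/(k+1)) · (C(d-1,l)/(l+1)) · ψ_{2d+1}^{k+l+2}(θ) = (1/d²)·(ψ_1^0(θ) - 2·ψ_{d+1}^0(θ) + ψ_{2d+1}^0(θ)), where ψ_1^0(θ) = 1/2. -/

import Mathlib

open Finset Filter

/-- ψ_n^k(θ) = (∏_{i=1}^{k}(θ+i-1) · ∏_{j=1}^{n-k}(θ+j-1)) / ∏_{l=1}^{n}(2θ+l-1). -/
noncomputable def psi (θ : ℝ) (n k : ℕ) : ℝ :=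
  ((∏ i ∈ Finset.range k, (θ + i)) * ∏ j ∈ Finset.range (n - k), (θ + j)) /
    ∏ l ∈ Finset.range n, (2 * θ + l)
lemma denom_pos {θ : ℝ} (hθ : 0 < θ) (n : ℕ) : 0 < ∏ l ∈ Finset.range n, (2 * θ + l) :=
  Finset.prod_pos (fun l _ => by positivity)

lemma psi_rec {θ : ℝ} (hθ : 0 < θ) {n j : ℕ} (hj : j ≤ n) :
    psi θ n j = psi θ (n + 1) j + psi θ (n + 1) (j + 1) := by
  have h1 : n + 1 - j = (n - j) + 1 := by omega
  have h2 : n + 1 - (j + 1) = n - j := by omega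
  have hc : ((n - j : ℕ) : ℝ) = (n : ℝ) - j := by
    push_cast [Nat.cast_sub hj]; ring
  unfold psi
  rw [h1, h2, Finset.prod_range_succ, Finset.prod_range_succ (f := fun i => θ + (i:ℝ)) j,
    Finset.prod_range_succ (f := fun l => 2*θ + (l:ℝ)) n]
  have hD : (∏ l ∈ Finset.range n, (2 * θ + l)) ≠ 0 := (denom_pos hθ n).ne'
  have hL : (2 * θ + (n:ℝ)) ≠ 0 := by positivity
  field_simp
  simp only [hc]; ring

lemma psi_binom {θ : ℝ} (hθ : 0 < θ) :
    ∀ m n a : ℕ, a ≤ n →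
      ∑ k ∈ Finset.range (m + 1), (Nat.choose m k : ℝ) * psi θ (n + m) (a + k) = psi θ n a := by
  intro m
  induction m with
  | zero => intro n a _; simp
  | succ m ih =>
    intro n a ha
    have key : ∀ k ∈ Finset.range (m + 1),
        (Nat.choose m k : ℝ) * psi θ (n + m) (a + k) =
        (Nat.choose m k : ℝ) * psi θ (n + m + 1) (a + k)
          + (Nat.choose m k : ℝ) * psi θ (n + m + 1) (a + k + 1) := by
      intro k hk
      rw [← mul_add, ← psi_rec hθ (by simp at hk; omega)]
    calc ∑ k ∈ Finset.range (m + 2), (Nat.choose (m+1) k : ℝ) * psi θ (n + (m+1)) (a + k)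
        = ∑ k ∈ Finset.range (m + 1), (Nat.choose (m+1) (k+1) : ℝ) * psi θ (n + m + 1) (a + (k+1))
          + (Nat.choose (m+1) 0 : ℝ) * psi θ (n + m + 1) (a + 0) := by
          rw [Finset.sum_range_succ' (fun k => (Nat.choose (m+1) k : ℝ) * psi θ (n + (m+1)) (a + k)) (m+1)]
          norm_num [Nat.add_assoc]
      _ = ∑ k ∈ Finset.range (m + 1), (Nat.choose m k : ℝ) * psi θ (n + m + 1) (a + k + 1)
          + (∑ k ∈ Finset.range (m + 1), (Nat.choose m (k+1) : ℝ) * psi θ (n + m + 1) (a + (k+1))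
            + (Nat.choose m 0 : ℝ) * psi θ (n + m + 1) (a + 0)) := by
          have h : ∀ k ∈ Finset.range (m+1),
              (Nat.choose (m+1) (k+1) : ℝ) * psi θ (n + m + 1) (a + (k+1)) =
              (Nat.choose m k : ℝ) * psi θ (n + m + 1) (a + k + 1)
                + (Nat.choose m (k+1) : ℝ) * psi θ (n + m + 1) (a + (k+1)) := by
            intro k _
            rw [Nat.choose_succ_succ]
            push_cast
            rw [show a + (k+1) = a + k + 1 from rfl]
            ring
          rw [Finset.sum_congr rfl h, Finset.sum_add_distrib]
          norm_num [add_assoc]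
      _ = ∑ k ∈ Finset.range (m + 1), (Nat.choose m k : ℝ) * psi θ (n + m + 1) (a + k + 1)
          + ∑ k ∈ Finset.range (m + 2), (Nat.choose m k : ℝ) * psi θ (n + m + 1) (a + k) := by
          rw [Finset.sum_range_succ' (fun k => (Nat.choose m k : ℝ) * psi θ (n + m + 1) (a + k)) (m+1)]
      _ = ∑ k ∈ Finset.range (m + 1), (Nat.choose m k : ℝ) * psi θ (n + m + 1) (a + k + 1)
          + ∑ k ∈ Finset.range (m + 1), (Nat.choose m k : ℝ) * psi θ (n + m + 1) (a + k) := by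
          rw [Finset.sum_range_succ (fun k => (Nat.choose m k : ℝ) * psi θ (n + m + 1) (a + k)) (m+1)]
          simp [Nat.choose_succ_self]
      _ = ∑ k ∈ Finset.range (m + 1), (Nat.choose m k : ℝ) * psi θ (n + m) (a + k) := by
          rw [add_comm, ← Finset.sum_add_distrib]
          exact (Finset.sum_congr rfl key).symm
      _ = psi θ n a := ih n a ha

theorem snowdrift_Mcc_identity (θ : ℝ) (hθ : 0 < θ) (d : ℕ) (hd : 1 ≤ d) :
    ∑ k ∈ Finset.range d, ∑ l ∈ Finset.range d,
      ((Nat.choose (d - 1) k : ℝ) / (k + 1)) * ((Nat.choose (d - 1) l : ℝ) / (l + 1)) *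
        psi θ (2 * d + 1) (k + l + 2) =
      (1 / (d : ℝ) ^ 2) * (1 / 2 - 2 * psi θ (d + 1) 0 + psi θ (2 * d + 1) 0) := by
  have hd0 : (d : ℝ) ≠ 0 := by positivity
  -- coefficient conversion
  have hcoef : ∀ k : ℕ, ((Nat.choose (d-1) k : ℝ) / (k + 1)) = (Nat.choose d (k+1) : ℝ) / d := by
    intro k
    have h := Nat.add_one_mul_choose_eq (d-1) k
    rw [Nat.sub_add_cancel hd] at h
    have h' : (d : ℝ) * (Nat.choose (d-1) k) = (Nat.choose d (k+1)) * (k+1) := by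
      exact_mod_cast congrArg (Nat.cast : ℕ → ℝ) h
    have hk1 : ((k:ℝ) + 1) ≠ 0 := by positivity
    field_simp
    linarith [h']
  -- key binomial sums
  have hA : ∀ a : ℕ, a ≤ d + 1 →
      ∑ l ∈ Finset.range (d + 1), (Nat.choose d l : ℝ) * psi θ (2*d+1) (a + l) = psi θ (d+1) a := by
    intro a ha
    have := psi_binom hθ d (d+1) a ha
    rwa [show d + 1 + d = 2*d+1 by ring] at this
  have hB : ∑ k ∈ Finset.range (d + 1), (Nat.choose d k : ℝ) * psi θ (d+1) k = psi θ 1 0 := by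
    have := psi_binom hθ d 1 0 (by norm_num)
    simpa [Nat.add_comm] using this
  have hpsi1 : psi θ 1 0 = 1 / 2 := by
    simp [psi]
    field_simp
  -- inner sum
  have hinner : ∀ k ∈ Finset.range d,
      ∑ l ∈ Finset.range d, (Nat.choose d (l+1) : ℝ) * psi θ (2*d+1) (k + l + 2) =
      psi θ (d+1) (k+1) - psi θ (2*d+1) (k+1) := by
    intro k hk
    have h := hA (k+1) (by simp at hk; omega)
    rw [Finset.sum_range_succ' (fun l => (Nat.choose d l : ℝ) * psi θ (2*d+1) (k+1+l)) d] at h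
    simp only [Nat.choose_zero_right, Nat.cast_one, one_mul, Nat.add_zero] at h
    have : ∀ l, k + 1 + (l + 1) = k + l + 2 := by omega
    simp only [this] at h
    linarith [h]
  -- outer sum
  have houter :
      ∑ k ∈ Finset.range d, (Nat.choose d (k+1) : ℝ) * (psi θ (d+1) (k+1) - psi θ (2*d+1) (k+1)) =
      1/2 - 2 * psi θ (d+1) 0 + psi θ (2*d+1) 0 := by
    have h1 : ∑ k ∈ Finset.range d, (Nat.choose d (k+1) : ℝ) * psi θ (d+1) (k+1) =
        psi θ 1 0 - psi θ (d+1) 0 := by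
      have := hB
      rw [Finset.sum_range_succ' (fun k => (Nat.choose d k : ℝ) * psi θ (d+1) k) d] at this
      simp only [Nat.choose_zero_right, Nat.cast_one, one_mul] at this
      linarith
    have h2 : ∑ k ∈ Finset.range d, (Nat.choose d (k+1) : ℝ) * psi θ (2*d+1) (k+1) =
        psi θ (d+1) 0 - psi θ (2*d+1) 0 := by
      have h := hA 0 (by omega)
      simp only [Nat.zero_add] at h
      rw [Finset.sum_range_succ' (fun k => (Nat.choose d k : ℝ) * psi θ (2*d+1) k) d] at h
      simp only [Nat.choose_zero_right, Nat.cast_one, one_mul] at h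
      linarith
    simp only [mul_sub]
    rw [Finset.sum_sub_distrib, h1, h2, hpsi1]
    ring
  -- assemble
  calc ∑ k ∈ Finset.range d, ∑ l ∈ Finset.range d,
      ((Nat.choose (d - 1) k : ℝ) / (k + 1)) * ((Nat.choose (d - 1) l : ℝ) / (l + 1)) *
        psi θ (2 * d + 1) (k + l + 2)
      = (1 / (d:ℝ)^2) * ∑ k ∈ Finset.range d, (Nat.choose d (k+1) : ℝ) *
          ∑ l ∈ Finset.range d, (Nat.choose d (l+1) : ℝ) * psi θ (2*d+1) (k + l + 2) := by
        rw [Finset.mul_sum]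
        apply Finset.sum_congr rfl
        intro k _
        rw [Finset.mul_sum, Finset.mul_sum]
        apply Finset.sum_congr rfl
        intro l _
        rw [hcoef k, hcoef l]
        field_simp
    _ = (1 / (d:ℝ)^2) * (1/2 - 2 * psi θ (d+1) 0 + psi θ (2*d+1) 0) := by
        rw [Finset.sum_congr rfl (fun k hk => by rw [hinner k hk]), houter]
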